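/- Let X be a polyhedral normed space, f : X → X real analytic and nonexpansive, and let M(f) be the union of all minimal locked subsets of B_{X*}. If x, y ∈ Fix(f) satisfy φ(x) = φ(y) for all φ ∈ M(f), then x = y. -/

import Mathlib

/-- The duality map: `J z` is the set of dual-unit-ball functionals attaining the norm at `z`. -/
def dualityMap {X : Type*} [NormedAddCommGroup X] [NormedSpace ℝ X] (z : X) :
    Set (X →L[ℝ] ℝ) := {φ | ‖φ‖ ≤ 1 ∧ φ z = ‖z‖}

/-- `S_E(f)`: points where `f` preserves the value of every functional in `E`. -/
def SE {X : Type*} [NormedAddCommGroup X] [NormedSpace ℝ X]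
    (f : X → X) (E : Set (X →L[ℝ] ℝ)) : Set X :=
  {x | ∀ φ ∈ E, φ (f x) = φ x}

/-- `E` is locked for `f` if there are `v, w ∈ S_E(f)` with `J(v-w) = E`. -/
def Locked {X : Type*} [NormedAddCommGroup X] [NormedSpace ℝ X]
    (f : X → X) (E : Set (X →L[ℝ] ℝ)) : Prop :=
  ∃ v ∈ SE f E, ∃ w ∈ SE f E, dualityMap (v - w) = E

/-- `M(f)`: the union of all minimal locked subsets of the dual unit ball. -/
def MLocked {X : Type*} [NormedAddCommGroup X] [NormedSpace ℝ X]
    (f : X → X) : Set (X →L[ℝ] ℝ) :=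
  ⋃ E ∈ {E : Set (X →L[ℝ] ℝ) | E ⊆ {φ | ‖φ‖ ≤ 1} ∧ Locked f E ∧
    ∀ G ⊂ E, ¬ Locked f G}, E

section Aux

variable {X : Type*} [NormedAddCommGroup X] [NormedSpace ℝ X]

/-- `J z` is nonempty. -/
lemma dualityMap_nonempty (z : X) : (dualityMap z).Nonempty := by
  obtain ⟨g, hg1, hg2⟩ := exists_dual_vector'' ℝ z
  exact ⟨g, hg1, hg2⟩

/-- `J z` is the set of maximizers of evaluation at `z` over the dual unit ball. -/
lemma dualityMap_eq_maximizers (z : X) :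
    dualityMap z = {φ : X →L[ℝ] ℝ | ‖φ‖ ≤ 1 ∧
      ∀ ψ : X →L[ℝ] ℝ, ‖ψ‖ ≤ 1 → ψ z ≤ φ z} := by
  ext φ
  constructor
  · rintro ⟨h1, h2⟩
    refine ⟨h1, fun ψ hψ => ?_⟩
    calc ψ z ≤ ‖ψ z‖ := le_abs_self _
    _ ≤ ‖ψ‖ * ‖z‖ := ψ.le_opNorm z
    _ ≤ 1 * ‖z‖ := by gcongr
    _ = φ z := by rw [one_mul, h2]
  · rintro ⟨h1, h2⟩
    refine ⟨h1, le_antisymm ?_ ?_⟩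
    · calc φ z ≤ ‖φ z‖ := le_abs_self _
      _ ≤ ‖φ‖ * ‖z‖ := φ.le_opNorm z
      _ ≤ 1 * ‖z‖ := by gcongr
      _ = ‖z‖ := one_mul _
    · obtain ⟨g, hg1, hg2⟩ := exists_dual_vector'' ℝ z
      calc ‖z‖ = g z := hg2.symm
      _ ≤ φ z := h2 g hg1

lemma dualityMap_isExposed (z : X) :
    IsExposed ℝ {φ : X →L[ℝ] ℝ | ‖φ‖ ≤ 1} (dualityMap z) := by
  intro _
  refine ⟨ContinuousLinearMap.apply ℝ ℝ z, ?_⟩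
  rw [dualityMap_eq_maximizers]
  ext φ
  simp [ContinuousLinearMap.apply_apply]

lemma dualityMap_convex (z : X) : Convex ℝ (dualityMap z) := by
  have h1 : Convex ℝ {φ : X →L[ℝ] ℝ | ‖φ‖ ≤ 1} := by
    have : {φ : X →L[ℝ] ℝ | ‖φ‖ ≤ 1} = Metric.closedBall 0 1 := by
      ext φ; simp [mem_closedBall_zero_iff]
    rw [this]; exact convex_closedBall 0 1
  have h2 : Convex ℝ {φ : X →L[ℝ] ℝ | φ z = ‖z‖} := by
    intro φ hφ ψ hψ a b _ _ hab
    simp only [Set.mem_setOf_eq] at *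
    simp [hφ, hψ, ← add_mul, hab]
  exact h1.inter h2

lemma dualityMap_isCompact [FiniteDimensional ℝ X] (z : X) :
    IsCompact (dualityMap z) := by
  have hB : IsCompact {φ : X →L[ℝ] ℝ | ‖φ‖ ≤ 1} := by
    have : {φ : X →L[ℝ] ℝ | ‖φ‖ ≤ 1} = Metric.closedBall 0 1 := by
      ext φ; simp [mem_closedBall_zero_iff]
    rw [this]; exact isCompact_closedBall 0 1
  apply hB.of_isClosed_subset
  · have h1 : IsClosed {φ : X →L[ℝ] ℝ | ‖φ‖ ≤ 1} :=
      isClosed_le (continuous_norm) continuous_const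
    have h2 : IsClosed {φ : X →L[ℝ] ℝ | φ z = ‖z‖} :=
      isClosed_eq ((ContinuousLinearMap.apply ℝ ℝ z).continuous) continuous_const
    exact h1.inter h2
  · exact fun φ hφ => hφ.1

/-- Reconstruction: a duality-map set is the closed convex hull of its extreme points. -/
lemma dualityMap_eq_closure_hull [FiniteDimensional ℝ X] (z : X) :
    closure (convexHull ℝ ((dualityMap z).extremePoints ℝ)) = dualityMap z :=
  closure_convexHull_extremePoints (dualityMap_isCompact z) (dualityMap_convex z)

lemma dualityMap_extremePoints_subset [FiniteDimensional ℝ X] (z : X) :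
    (dualityMap z).extremePoints ℝ ⊆
      Set.extremePoints ℝ {φ : X →L[ℝ] ℝ | ‖φ‖ ≤ 1} :=
  ((dualityMap_isExposed z).isExtreme).extremePoints_subset_extremePoints

/-- There are only finitely many duality-map sets in a polyhedral space. -/
lemma finite_dualityMap_range [FiniteDimensional ℝ X]
    (hpoly : (Set.extremePoints ℝ {φ : X →L[ℝ] ℝ | ‖φ‖ ≤ 1}).Finite) :
    {E : Set (X →L[ℝ] ℝ) | ∃ z : X, E = dualityMap z}.Finite := by
  apply Set.Finite.of_finite_image (f := fun E => E.extremePoints ℝ)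
  · apply hpoly.finite_subsets.subset
    rintro _ ⟨E, ⟨z, rfl⟩, rfl⟩
    exact dualityMap_extremePoints_subset z
  · rintro E ⟨z, rfl⟩ F ⟨w, rfl⟩ hEF
    simp only at hEF
    rw [← dualityMap_eq_closure_hull z, ← dualityMap_eq_closure_hull w, hEF]

end Aux

theorem stmt_8 {X : Type*} [NormedAddCommGroup X] [NormedSpace ℝ X]
    [FiniteDimensional ℝ X]
    (hpoly : (Set.extremePoints ℝ {φ : X →L[ℝ] ℝ | ‖φ‖ ≤ 1}).Finite)
    (f : X → X) (hf_an : ∀ x : X, AnalyticAt ℝ f x)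
    (hf : ∀ u v : X, ‖f u - f v‖ ≤ ‖u - v‖)
    (x y : X) (hx : f x = x) (hy : f y = y)
    (h : ∀ φ ∈ MLocked f, φ x = φ y) :
    x = y := by
  set E₀ := dualityMap (x - y) with hE₀
  have hxSE : ∀ E, x ∈ SE f E := fun E φ _ => by rw [hx]
  have hySE : ∀ E, y ∈ SE f E := fun E φ _ => by rw [hy]
  have hE₀locked : Locked f E₀ := ⟨x, hxSE E₀, y, hySE E₀, rfl⟩
  -- the family of locked subsets of E₀ is finite and nonempty
  set L : Set (Set (X →L[ℝ] ℝ)) := {G | Locked f G ∧ G ⊆ E₀} with hL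
  have hLfin : L.Finite := by
    apply (finite_dualityMap_range hpoly).subset
    rintro G ⟨⟨v, -, w, -, rfl⟩, -⟩
    exact ⟨v - w, rfl⟩
  have hLne : L.Nonempty := ⟨E₀, hE₀locked, Set.Subset.rfl⟩
  obtain ⟨G, hGL, hGmin⟩ := Set.Finite.exists_minimalFor id L hLfin hLne
  simp only [id] at hGmin
  -- G is a minimal locked set
  have hGsub : G ⊆ {φ : X →L[ℝ] ℝ | ‖φ‖ ≤ 1} := fun φ hφ => (hGL.2 hφ).1
  have hGminlocked : ∀ H ⊂ G, ¬ Locked f H := by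
    intro H hHG hHlocked
    have hHL : H ∈ L := ⟨hHlocked, hHG.1.trans hGL.2⟩
    exact hHG.2 (hGmin hHL hHG.1)
  -- G is nonempty since it is a duality-map set
  obtain ⟨v, -, w, -, hvw⟩ := hGL.1
  obtain ⟨φ, hφG⟩ : G.Nonempty := hvw ▸ dualityMap_nonempty (v - w)
  -- φ ∈ MLocked f
  have hφM : φ ∈ MLocked f := by
    rw [MLocked]
    exact Set.mem_biUnion ⟨hGsub, hGL.1, hGminlocked⟩ hφG
  have hφE₀ : φ ∈ E₀ := hGL.2 hφG
  have hnorm : φ (x - y) = ‖x - y‖ := hφE₀.2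
  rw [map_sub, h φ hφM, sub_self] at hnorm
  rw [← sub_eq_zero, ← norm_eq_zero, ← hnorm]
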